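/- A field F admits a field ordering (is formally real) if and only if -1 is not a sum of squares in F. -/

import Mathlib

/-- A field ordering of `F`, presented by its positive cone `P`:
`P` is closed under addition and multiplication, every element or its negative
lies in `P`, and `-1 ∉ P`. This is equivalent to a linear order making `F` an
ordered field (with `a ≤ b ↔ b - a ∈ P`). -/
structure FieldOrdering (F : Type*) [Field F] where
  P : Set F
  add_mem : ∀ a ∈ P, ∀ b ∈ P, a + b ∈ P
  mul_mem : ∀ a ∈ P, ∀ b ∈ P, a * b ∈ P
  total : ∀ a : F, a ∈ P ∨ -a ∈ P
  neg_one_not_mem : (-1 : F) ∉ P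

namespace ASaux

variable {F : Type*} [Field F]

/-- Preorderings of `F`. -/
def Pre (F : Type*) [Field F] : Set (Set F) :=
  {T | (∀ x : F, x * x ∈ T) ∧ (∀ a ∈ T, ∀ b ∈ T, a + b ∈ T) ∧
    (∀ a ∈ T, ∀ b ∈ T, a * b ∈ T) ∧ (-1 : F) ∉ T}

lemma sumsq_mem {T : Set F} (hT : T ∈ Pre F) {s : F} (hs : IsSumSq s) : s ∈ T := by
  induction hs with
  | zero => simpa using hT.1 0
  | sq_add a _ ih => exact hT.2.1 _ (hT.1 a) _ ih

lemma sq_mul_sumsq {x b : F} (hb : IsSumSq b) : IsSumSq (x * x * b) := by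
  induction hb with
  | zero => simpa using IsSumSq.zero
  | sq_add y _ ih =>
    rw [mul_add]
    refine IsSumSq.add ?_ ih
    have h : x * x * (y * y) = (x * y) * (x * y) := by ring
    rw [h]
    simpa using IsSumSq.sq_add (x * y) IsSumSq.zero

lemma sumsq_pre (h : ¬ IsSumSq (-1 : F)) : {x : F | IsSumSq x} ∈ Pre F := by
  refine ⟨fun x => ?_, fun a ha b hb => IsSumSq.add ha hb, fun a ha b hb => ?_, h⟩
  · simpa using IsSumSq.sq_add x IsSumSq.zero
  · -- products of sums of squares
    simp only [Set.mem_setOf_eq] at *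
    induction ha with
    | zero => simpa using IsSumSq.zero
    | sq_add x _ ih =>
      rw [add_mul]
      exact IsSumSq.add (sq_mul_sumsq hb) ih

lemma extend {T : Set F} (hT : T ∈ Pre F) {a : F} (ha : -a ∉ T) :
    {x : F | ∃ t₁ ∈ T, ∃ t₂ ∈ T, x = t₁ + a * t₂} ∈ Pre F := by
  obtain ⟨hsq, hadd, hmul, hneg⟩ := hT
  have h0 : (0 : F) ∈ T := by simpa using hsq 0
  have h1 : (1 : F) ∈ T := by simpa using hsq 1
  refine ⟨fun x => ⟨x * x, hsq x, 0, h0, by ring⟩, ?_, ?_, ?_⟩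
  · rintro _ ⟨t₁, h₁, t₂, h₂, rfl⟩ _ ⟨s₁, g₁, s₂, g₂, rfl⟩
    exact ⟨t₁ + s₁, hadd _ h₁ _ g₁, t₂ + s₂, hadd _ h₂ _ g₂, by ring⟩
  · rintro _ ⟨t₁, h₁, t₂, h₂, rfl⟩ _ ⟨s₁, g₁, s₂, g₂, rfl⟩
    refine ⟨t₁ * s₁ + (a * a) * (t₂ * s₂),
      hadd _ (hmul _ h₁ _ g₁) _ (hmul _ (hsq a) _ (hmul _ h₂ _ g₂)),
      t₁ * s₂ + t₂ * s₁, hadd _ (hmul _ h₁ _ g₂) _ (hmul _ h₂ _ g₁), by ring⟩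
  · rintro ⟨t₁, h₁, t₂, h₂, heq⟩
    by_cases ht₂ : t₂ = 0
    · apply hneg; rw [ht₂, mul_zero, add_zero] at heq; rw [heq]; exact h₁
    · apply ha
      have : -a = (1 + t₁) * t₂ * (t₂⁻¹ * t₂⁻¹) := by
        field_simp
        linear_combination heq
      rw [this]
      exact hmul _ (hmul _ (hadd _ h1 _ h₁) _ h₂) _ (hsq t₂⁻¹)

end ASaux

/-- **Artin–Schreier.** A field `F` admits a field ordering (is formally real)
if and only if `-1` is not a sum of squares in `F`. -/
theorem artin_schreier (F : Type*) [Field F] :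
    Nonempty (FieldOrdering F) ↔ ¬ IsSumSq (-1 : F) := by
  constructor
  · rintro ⟨O⟩ h
    have hsq : ∀ x : F, x * x ∈ O.P := by
      intro x
      rcases O.total x with hx | hx
      · exact O.mul_mem _ hx _ hx
      · simpa using O.mul_mem _ hx _ hx
    apply O.neg_one_not_mem
    exact ASaux.sumsq_mem ⟨hsq, O.add_mem, O.mul_mem, O.neg_one_not_mem⟩ h
  · intro h
    obtain ⟨T, -, hTmax⟩ :
        ∃ T, {x : F | IsSumSq x} ⊆ T ∧ Maximal (· ∈ ASaux.Pre F) T := by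
      obtain ⟨T, hsub, hmax⟩ := zorn_subset_nonempty (ASaux.Pre F)
        (fun c hc hchain ⟨t, ht⟩ => by
          refine ⟨⋃₀ c, ⟨fun x => Set.mem_sUnion.2 ⟨t, ht, (hc ht).1 x⟩, ?_, ?_, ?_⟩,
            fun s hs => Set.subset_sUnion_of_mem hs⟩
          · rintro a ⟨s₁, hs₁, ha⟩ b ⟨s₂, hs₂, hb⟩
            rcases hchain.total hs₁ hs₂ with hle | hle
            · exact ⟨s₂, hs₂, (hc hs₂).2.1 _ (hle ha) _ hb⟩
            · exact ⟨s₁, hs₁, (hc hs₁).2.1 _ ha _ (hle hb)⟩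
          · rintro a ⟨s₁, hs₁, ha⟩ b ⟨s₂, hs₂, hb⟩
            rcases hchain.total hs₁ hs₂ with hle | hle
            · exact ⟨s₂, hs₂, (hc hs₂).2.2.1 _ (hle ha) _ hb⟩
            · exact ⟨s₁, hs₁, (hc hs₁).2.2.1 _ ha _ (hle hb)⟩
          · rintro ⟨s, hs, hneg⟩
            exact (hc hs).2.2.2 hneg)
        _ (ASaux.sumsq_pre h)
      exact ⟨T, hsub, hmax⟩
    obtain ⟨hsq, hadd, hmul, hneg⟩ := hTmax.1
    refine ⟨⟨T, hadd, hmul, ?_, hneg⟩⟩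
    intro a
    by_contra hcon
    push_neg at hcon
    obtain ⟨ha, hna⟩ := hcon
    have hext := ASaux.extend ⟨hsq, hadd, hmul, hneg⟩ hna
    have hsub : T ⊆ {x : F | ∃ t₁ ∈ T, ∃ t₂ ∈ T, x = t₁ + a * t₂} := by
      intro x hx
      exact ⟨x, hx, 0, by simpa using hsq 0, by ring⟩
    have := hTmax.2 hext hsub
    apply ha
    apply this
    exact ⟨0, by simpa using hsq 0, 1, by simpa using hsq 1, by ring⟩
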